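/- Let C be a finite set of m parties, c_1 ∈ C, S ⊆ C∖{c_1} with |S| = ℓ, and let k_1 be an integer with ℓ ≤ k_1 ≤ m−1. For an integer v, there exists a linear order O on C with pos(O,c_1) = m−k_1 and every member of S ranked below c_1 such that Borda(O,S) = v, if and only if ℓ(ℓ−1)/2 ≤ v ≤ ℓ·k_1 − ℓ(ℓ+1)/2. -/

import Mathlib

open Finset

namespace Stmt4

/-- The Borda score of party `c` under the linear order `O`:
`Borda(O,c) = m − pos(O,c)`, where `pos(O,c) = (O c).val + 1`. -/
def borda {C : Type*} [Fintype C] (O : C ≃ Fin (Fintype.card C)) (c : C) : ℕ :=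
  Fintype.card C - 1 - (O c).val

/-- The total Borda score of a set `S` of parties. -/
def bordaSum {C : Type*} [Fintype C] (O : C ≃ Fin (Fintype.card C)) (S : Finset C) : ℕ :=
  ∑ c ∈ S, borda O c


theorem lemB : ∀ (ℓ : ℕ) (T : Finset ℕ), T.card = ℓ → ℓ * (ℓ - 1) ≤ 2 * ∑ t ∈ T, t := by
  intro ℓ
  induction ℓ with
  | zero => intro T h; simp
  | succ n ih =>
    intro T h
    have hne : T.Nonempty := Finset.card_pos.mp (by omega)
    set M := T.max' hne with hM
    have hMmem : M ∈ T := T.max'_mem hne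
    have hsub : T ⊆ Finset.range (M+1) := by
      intro x hx
      simp only [Finset.mem_range]
      have := Finset.le_max' T x hx
      omega
    have hcard : T.card ≤ M + 1 := by
      calc T.card ≤ (Finset.range (M+1)).card := Finset.card_le_card hsub
        _ = M + 1 := by simp
    have hM' : n ≤ M := by omega
    have he : (T.erase M).card = n := by rw [Finset.card_erase_of_mem hMmem]; omega
    have ihh := ih (T.erase M) he
    have hsum : ∑ t ∈ T, t = M + ∑ t ∈ T.erase M, t := (Finset.add_sum_erase T id hMmem).symm
    have key : n * (n-1) + 2*n = n*n + n := by
      cases n with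
      | zero => simp
      | succ m => simp only [Nat.succ_sub_one]; ring
    have h2 : 2*n + n*(n-1) ≤ 2 * ∑ t ∈ T, t := by rw [hsum]; omega
    have key2 : (n+1) * ((n+1) - 1) = n*n + n := by simp; ring
    omega

theorem lemC (ℓ k : ℕ) (T : Finset ℕ) (hsub : T ⊆ Finset.range k) (hcard : T.card = ℓ) :
    2 * ∑ t ∈ T, t + ℓ * (ℓ + 1) ≤ 2 * (ℓ * k) := by
  have hlk : ℓ ≤ k := by
    calc ℓ = T.card := hcard.symm
      _ ≤ (Finset.range k).card := Finset.card_le_card hsub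
      _ = k := by simp
  set U := Finset.range k \ T with hU
  have hUcard : U.card = k - ℓ := by
    rw [hU, Finset.card_sdiff_of_subset hsub, Finset.card_range, hcard]
  have hB := lemB (k - ℓ) U hUcard
  have hsplit : ∑ t ∈ U, t + ∑ t ∈ T, t = ∑ t ∈ Finset.range k, t := by
    rw [hU]; exact Finset.sum_sdiff hsub
  have hgauss : (∑ t ∈ Finset.range k, t) * 2 = k * (k - 1) := Finset.sum_range_id_mul_two k
  -- goal: 2*∑T + ℓ(ℓ+1) ≤ 2ℓk.  Know: (k-ℓ)(k-ℓ-1) ≤ 2∑U = k(k-1) - 2∑T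
  -- so 2∑T ≤ k(k-1) - (k-ℓ)(k-ℓ-1) = 2ℓk - ℓ² - ℓ.
  zify at hB hsplit hgauss hlk ⊢
  have e1 : ((k - ℓ : ℕ) : ℤ) = (k : ℤ) - ℓ := by omega
  have e2 : ((k - ℓ - 1 : ℕ) : ℤ) = max ((k:ℤ) - ℓ - 1) 0 := by omega
  have e3 : ((k - 1 : ℕ) : ℤ) = max ((k:ℤ) - 1) 0 := by omega
  rw [e1, e2] at hB
  rw [e3] at hgauss
  rcases le_or_gt ((k:ℤ) - ℓ) 0 with h | h
  · -- ℓ = k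
    have hek : (ℓ:ℤ) = k := by omega
    rcases le_or_gt (k:ℤ) 0 with h2 | h2
    · have : (k:ℤ) = 0 := by omega
      rw [max_eq_right (by omega)] at hgauss
      nlinarith [Finset.sum_nonneg (fun t (_ : t ∈ T) => Nat.zero_le t)]
    · rw [max_eq_left (by omega)] at hgauss
      have hUsum : (∑ t ∈ U, (t:ℤ)) ≥ 0 := Finset.sum_nonneg (fun t _ => by positivity)
      nlinarith
  · rw [max_eq_left (by omega)] at hB
    rcases le_or_gt (k:ℤ) 0 with h2 | h2
    · omega
    · rw [max_eq_left (by omega)] at hgauss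
      nlinarith

theorem lemA : ∀ (ℓ : ℕ) (k v : ℕ), ℓ ≤ k → ℓ * (ℓ - 1) ≤ 2 * v → 2 * v + ℓ * (ℓ + 1) ≤ 2 * (ℓ * k) →
    ∃ T : Finset ℕ, T ⊆ Finset.range k ∧ T.card = ℓ ∧ ∑ t ∈ T, t = v := by
  intro ℓ
  induction ℓ with
  | zero =>
    intro k v _ _ h2
    have : v = 0 := by omega
    exact ⟨∅, by simp [this]⟩
  | succ n ih =>
    intro k v hlk h1 h2
    have hmul0 : n * (n - 1) + n = n * n := by
      cases n with | zero => simp | succ m => simp [Nat.succ_sub_one]; ring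
    have hmul1 : (n+1) * ((n+1) - 1) = n * n + n := by simp; ring
    have hmul2 : (n+1) * ((n+1) + 1) = n * (n+1) + 2*n + 2 := by ring
    have hmul3 : (n+1) * k = n * k + k := by ring
    have hnn : n * (n+1) = n * n + n := by ring
    obtain ⟨w, hw⟩ : ∃ w, n * (n - 1) = 2 * w := by
      rcases Nat.even_mul_pred_self n with ⟨w, hw⟩
      exact ⟨w, by omega⟩
    have hvw : w + n ≤ v := by omega
    have hkpos : 1 ≤ k := by omega
    have step : ∀ t : ℕ, n ≤ t → t + 1 ≤ k → t ≤ v →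
        n * (n - 1) ≤ 2 * (v - t) → 2 * (v - t) + n * (n + 1) ≤ 2 * (n * t) →
        ∃ T : Finset ℕ, T ⊆ Finset.range k ∧ T.card = n + 1 ∧ ∑ x ∈ T, x = v := by
      intro t hnt htk htv hb1 hb2
      obtain ⟨T', hT'sub, hT'card, hT'sum⟩ := ih t (v - t) hnt hb1 hb2
      have htT' : t ∉ T' := fun h => by simpa using Finset.mem_range.mp (hT'sub h)
      refine ⟨insert t T', ?_, ?_, ?_⟩
      · intro x hx
        rcases Finset.mem_insert.mp hx with rfl | hx
        · exact Finset.mem_range.mpr (by omega)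
        · exact Finset.mem_range.mpr (by have := Finset.mem_range.mp (hT'sub hx); omega)
      · rw [Finset.card_insert_of_notMem htT', hT'card]
      · rw [Finset.sum_insert htT', hT'sum]; omega
    rcases le_total (v - w) (k - 1) with hc | hc
    · -- t = v - w
      have hnt : n ≤ v - w := by omega
      have hmulnt : n * n ≤ n * (v - w) := Nat.mul_le_mul_left n hnt
      exact step (v - w) hnt (by omega) (by omega) (by omega) (by omega)
    · -- t = k - 1
      have hnk : n * (k - 1) + n = n * k := by
        cases k with | zero => omega | succ m => simp [Nat.succ_sub_one]; ring
      exact step (k - 1) (by omega) (by omega) (by omega) (by omega) (by omega)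

/-- with `pos(O,c₁) = m − k₁` and all of `S` (of size `ℓ ≤ k₁`) below `c₁`,
the attainable values of `Borda(O,S)` are exactly the integers in
`[ℓ(ℓ−1)/2, ℓ·k₁ − ℓ(ℓ+1)/2]`. -/
theorem stmt_4 {C : Type*} [Fintype C] [DecidableEq C] (c1 : C) (S : Finset C)
    (hc1S : c1 ∉ S) (ℓ k1 : ℕ) (hS : S.card = ℓ)
    (hlk : ℓ ≤ k1) (hk1 : k1 ≤ Fintype.card C - 1) (v : ℤ) :
    (∃ O : C ≃ Fin (Fintype.card C),
        (O c1).val + 1 = Fintype.card C - k1 ∧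
        (∀ c ∈ S, O c1 < O c) ∧
        (bordaSum O S : ℤ) = v) ↔
      ((ℓ : ℤ) * ((ℓ : ℤ) - 1)) / 2 ≤ v ∧
        v ≤ (ℓ : ℤ) * (k1 : ℤ) - ((ℓ : ℤ) * ((ℓ : ℤ) + 1)) / 2 := by
  set m := Fintype.card C with hm
  have hmpos : 0 < m := Fintype.card_pos_iff.mpr ⟨c1⟩
  have hk1m : k1 + 1 ≤ m := by omega
  have e1 : ((ℓ : ℤ) * ((ℓ : ℤ) - 1)) = ((ℓ * (ℓ - 1) : ℕ) : ℤ) := by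
    cases ℓ with
    | zero => simp
    | succ p => push_cast [Nat.succ_sub_one]; ring
  have e2 : ((ℓ : ℤ) * ((ℓ : ℤ) + 1)) = ((ℓ * (ℓ + 1) : ℕ) : ℤ) := by push_cast; ring
  have e3 : (ℓ : ℤ) * (k1 : ℤ) = ((ℓ * k1 : ℕ) : ℤ) := by push_cast; ring
  obtain ⟨w1, hw1⟩ : ∃ w, ℓ * (ℓ - 1) = 2 * w := by
    rcases Nat.even_mul_pred_self ℓ with ⟨w, hw⟩; exact ⟨w, by omega⟩
  obtain ⟨w2, hw2⟩ : ∃ w, ℓ * (ℓ + 1) = 2 * w := by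
    rcases Nat.even_mul_succ_self ℓ with ⟨w, hw⟩; exact ⟨w, by omega⟩
  rw [e1, e2, e3]
  constructor
  · rintro ⟨O, hpos, hbelow, hsum⟩
    -- forward direction
    have hval : (O c1).val = m - k1 - 1 := by omega
    have hinj : Set.InjOn (borda O) S := by
      intro a ha b hb hab
      have h1 : (O a).val < m := (O a).isLt
      have h2 : (O b).val < m := (O b).isLt
      have : (O a).val = (O b).val := by
        simp only [borda] at hab; omega
      exact O.injective (Fin.ext this)
    set T : Finset ℕ := S.image (borda O) with hT
    have hTcard : T.card = ℓ := by rw [hT, Finset.card_image_of_injOn hinj, hS]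
    have hTsum : ∑ t ∈ T, t = bordaSum O S := by
      rw [hT, Finset.sum_image (fun a ha b hb => hinj ha hb)]; rfl
    have hTsub : T ⊆ Finset.range k1 := by
      intro t ht
      rw [hT, Finset.mem_image] at ht
      obtain ⟨c, hc, rfl⟩ := ht
      have h1 : (O c).val < m := (O c).isLt
      have h2 : (O c1) < O c := hbelow c hc
      have h3 : (O c1).val < (O c).val := h2
      simp only [borda, Finset.mem_range]
      omega
    have hB := lemB ℓ T hTcard
    have hC := lemC ℓ k1 T hTsub hTcard
    rw [hTsum] at hB hC
    omega
  · rintro ⟨hlow, hhigh⟩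
    have hv0 : 0 ≤ v := by omega
    set n := v.toNat with hn
    have hvn : (n : ℤ) = v := Int.toNat_of_nonneg hv0
    have hn1 : ℓ * (ℓ - 1) ≤ 2 * n := by omega
    have hn2 : 2 * n + ℓ * (ℓ + 1) ≤ 2 * (ℓ * k1) := by omega
    obtain ⟨T, hTsub, hTcard, hTsum⟩ := lemA ℓ k1 n hlk hn1 hn2
    have hcards : S.card = T.card := by rw [hS, hTcard]
    obtain ⟨e, -⟩ : ∃ _e : {x // x ∈ S} ≃ {x // x ∈ T}, True :=
      ⟨Finset.equivOfCardEq hcards, trivial⟩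
    have hlt : ∀ x : {x // x ∈ S}, ((e x : ℕ)) < k1 := fun x =>
      Finset.mem_range.mp (hTsub (e x).2)
    let f : C → Fin m := fun c =>
      if hc : c ∈ S then ⟨m - 1 - ((e ⟨c, hc⟩ : ℕ)), by omega⟩
      else if c = c1 then ⟨m - k1 - 1, by omega⟩ else ⟨0, hmpos⟩
    have hfS : ∀ (c : C) (hc : c ∈ S), f c = ⟨m - 1 - ((e ⟨c, hc⟩ : ℕ)), by omega⟩ := by
      intro c hc; simp only [f, dif_pos hc]
    have hfc1 : f c1 = ⟨m - k1 - 1, by omega⟩ := by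
      simp only [f, dif_neg hc1S]
      simp
    have hinj : Set.InjOn f ↑(insert c1 S) := by
      intro a ha b hb hab
      simp only [Finset.coe_insert, Set.mem_insert_iff, Finset.mem_coe] at ha hb
      rcases ha with rfl | ha <;> rcases hb with rfl | hb
      · rfl
      · exfalso
        rw [hfc1, hfS b hb] at hab
        have := hlt ⟨b, hb⟩
        have := Fin.val_eq_of_eq hab
        simp at this; omega
      · exfalso
        rw [hfc1, hfS a ha] at hab
        have := hlt ⟨a, ha⟩
        have := Fin.val_eq_of_eq hab
        simp at this; omega
      · rw [hfS a ha, hfS b hb] at hab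
        have h1 := hlt ⟨a, ha⟩
        have h2 := hlt ⟨b, hb⟩
        have h3 := Fin.val_eq_of_eq hab
        simp only at h3
        have : ((e ⟨a, ha⟩ : ℕ)) = ((e ⟨b, hb⟩ : ℕ)) := by omega
        have : e ⟨a, ha⟩ = e ⟨b, hb⟩ := Subtype.ext this
        have : (⟨a, ha⟩ : {x // x ∈ S}) = ⟨b, hb⟩ := e.injective this
        exact congrArg Subtype.val this
    obtain ⟨g, hg⟩ := Finset.exists_equiv_extend_of_card_eq
      (t := (Finset.univ : Finset (Fin m))) (by simp; exact hm.symm) (s := insert c1 S) (f := f)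
      (Finset.image_subset_iff.mpr (fun x _ => Finset.mem_univ _)) hinj
    obtain ⟨O, hO⟩ : ∃ O : C ≃ Fin m, ∀ c ∈ insert c1 S, O c = f c :=
      ⟨g.trans (Equiv.subtypeUnivEquiv (fun x => Finset.mem_univ x)), fun c hc => by
        show (Equiv.subtypeUnivEquiv (fun x : Fin m => Finset.mem_univ x)) (g c) = f c
        rw [Equiv.subtypeUnivEquiv_apply]
        exact hg c hc⟩
    have hOc1 : O c1 = f c1 := hO c1 (Finset.mem_insert_self _ _)
    have hOc1v : (O c1).val = m - k1 - 1 := by rw [hOc1, hfc1]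
    have hOSv : ∀ (c : C) (hc : c ∈ S), (O c).val = m - 1 - ((e ⟨c, hc⟩ : ℕ)) := by
      intro c hc
      rw [hO c (Finset.mem_insert_of_mem hc), hfS c hc]
    refine ⟨O, ?_, ?_, ?_⟩
    · omega
    · intro c hc
      have h1 := hlt ⟨c, hc⟩
      have h2 := hOSv c hc
      rw [Fin.lt_def]
      omega
    · have hborda : ∀ (c : C) (hc : c ∈ S), borda O c = ((e ⟨c, hc⟩ : ℕ)) := by
        intro c hc
        have h1 := hlt ⟨c, hc⟩
        have h2 := hOSv c hc
        simp only [borda, ← hm]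
        omega
      have hsum2 : bordaSum O S = ∑ t ∈ T, t := by
        rw [bordaSum]
        refine Finset.sum_bij (fun c hc => ((e ⟨c, hc⟩ : ℕ))) (fun c hc => (e ⟨c, hc⟩).2)
          ?_ ?_ (fun c hc => hborda c hc)
        · intro a ha b hb hab
          have : e ⟨a, ha⟩ = e ⟨b, hb⟩ := Subtype.ext hab
          exact congrArg Subtype.val (e.injective this)
        · intro t ht
          refine ⟨(e.symm ⟨t, ht⟩ : C), (e.symm ⟨t, ht⟩).2, ?_⟩
          have : (⟨(e.symm ⟨t, ht⟩ : C), (e.symm ⟨t, ht⟩).2⟩ : {x // x ∈ S}) = e.symm ⟨t, ht⟩ :=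
            Subtype.ext rfl
          show ((e ⟨(e.symm ⟨t, ht⟩ : C), (e.symm ⟨t, ht⟩).2⟩ : {x // x ∈ T}) : ℕ) = t
          rw [this, Equiv.apply_symm_apply]
      rw [hsum2, hTsum]; exact hvn
end Stmt4
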